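/- A compatible function f : Z_2 → Z_2 is ergodic if and only if it can be represented as f(x) = 1 + x + 2·(v(x+1) − v(x)) for some compatible v : Z_2 → Z_2. -/

import Mathlib

open scoped BigOperators

/-- The `j`-th binary digit of a 2-adic integer, as an element of `ZMod 2`. -/
noncomputable def bit2 (j : ℕ) (x : ℤ_[2]) : ZMod 2 := ((x.appr (j+1) / 2^j : ℕ) : ZMod 2)

/-- Compatibility = 1-Lipschitz w.r.t. the 2-adic metric. -/
def Compatible (f : ℤ_[2] → ℤ_[2]) : Prop := ∀ x y : ℤ_[2], ‖f x - f y‖ ≤ ‖x - y‖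

/-- Reduction of a 2-adic integer modulo `2^n`. -/
noncomputable def padMod (n : ℕ) (x : ℤ_[2]) : ZMod (2^n) := (x.appr n : ZMod (2^n))

/-- The map induced by `f : ℤ₂ → ℤ₂` on `ZMod (2^n)` (via canonical lifts). -/
noncomputable def inducedMap (n : ℕ) (f : ℤ_[2] → ℤ_[2]) : ZMod (2^n) → ZMod (2^n) :=
  fun a => padMod n (f ((a.val : ℕ) : ℤ_[2]))

/-- A self-map of a set is a single cycle (transitive on points). -/
def IsSingleCycle {α : Type*} (g : α → α) : Prop := ∀ a b : α, ∃ k : ℕ, g^[k] a = b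

/-- Measure preservation: `f` induces a bijection modulo `2^n` for every `n`. -/
def MeasurePreservingZ (f : ℤ_[2] → ℤ_[2]) : Prop := ∀ n : ℕ, Function.Bijective (inducedMap n f)

/-- Ergodicity: `f` induces a single-cycle permutation modulo `2^n` for every `n`. -/
def ErgodicZ (f : ℤ_[2] → ℤ_[2]) : Prop := ∀ n : ℕ, IsSingleCycle (inducedMap n f)

/-- Induced map modulo `2^n` of an `m`-variate map on `(ℤ₂)^m`. -/
noncomputable def inducedMapM (m n : ℕ) (G : (Fin m → ℤ_[2]) → Fin m → ℤ_[2]) :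
    (Fin m → ZMod (2^n)) → Fin m → ZMod (2^n) :=
  fun a j => padMod n (G (fun i => (((a i).val : ℕ) : ℤ_[2])) j)

/-- Coordinatewise compatibility of an `m`-variate map. -/
def CompatibleM (m : ℕ) (G : (Fin m → ℤ_[2]) → Fin m → ℤ_[2]) : Prop :=
  ∀ (n : ℕ) (x y : Fin m → ℤ_[2]), (∀ i, padMod n (x i) = padMod n (y i)) →
    ∀ j, padMod n (G x j) = padMod n (G y j)

/-- Ergodicity of an `m`-variate map: single cycle modulo `2^n` for all `n`. -/
def ErgodicM (m : ℕ) (G : (Fin m → ℤ_[2]) → Fin m → ℤ_[2]) : Prop :=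
  ∀ n : ℕ, IsSingleCycle (inducedMapM m n G)

/-- The 2-adic integer with prescribed binary digits. -/
noncomputable def ofBits (b : ℕ → ZMod 2) : ℤ_[2] := ∑' i : ℕ, ((b i).val : ℤ_[2]) * 2^i

/-- Bitwise XOR of 2-adic integers. -/
noncomputable def xor2 (x y : ℤ_[2]) : ℤ_[2] := ofBits (fun i => bit2 i x + bit2 i y)

/-- Bitwise AND of 2-adic integers. -/
noncomputable def and2 (x y : ℤ_[2]) : ℤ_[2] := ofBits (fun i => bit2 i x * bit2 i y)

/-- Bitwise AND of a list, the empty AND being `-1` (the all-ones string). -/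
noncomputable def andL (l : List ℤ_[2]) : ℤ_[2] := l.foldr and2 (-1)

lemma padMod_eq (n : ℕ) (x : ℤ_[2]) : padMod n x = PadicInt.toZModPow n x := rfl

lemma dvd_iff_norm_le (n : ℕ) (z : ℤ_[2]) :
    (2:ℤ_[2])^n ∣ z ↔ ‖z‖ ≤ (2:ℝ) ^ (-(n:ℤ)) := by
  rw [show ((2:ℝ)) = ((2:ℕ):ℝ) by norm_num,
    PadicInt.norm_le_pow_iff_mem_span_pow, Ideal.mem_span_singleton]
  norm_num

lemma padMod_eq_iff (n : ℕ) (x y : ℤ_[2]) :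
    padMod n x = padMod n y ↔ (2:ℤ_[2])^n ∣ (x - y) := by
  rw [padMod_eq, padMod_eq, ← sub_eq_zero, ← map_sub, ← RingHom.mem_ker,
    PadicInt.ker_toZModPow, Ideal.mem_span_singleton]
  norm_num
lemma compat_mod {f : ℤ_[2] → ℤ_[2]} (hf : Compatible f) {n : ℕ} {x y : ℤ_[2]}
    (h : padMod n x = padMod n y) : padMod n (f x) = padMod n (f y) := by
  rw [padMod_eq_iff] at h ⊢
  rw [dvd_iff_norm_le] at h ⊢
  exact le_trans (hf x y) h

lemma padMod_lift (n : ℕ) (a : ZMod (2^n)) : padMod n ((a.val : ℕ) : ℤ_[2]) = a := by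
  rw [padMod_eq, map_natCast, ZMod.natCast_val, ZMod.cast_id]

lemma inducedMap_padMod {f : ℤ_[2] → ℤ_[2]} (hf : Compatible f) (n : ℕ) (x : ℤ_[2]) :
    inducedMap n f (padMod n x) = padMod n (f x) := by
  exact compat_mod hf (padMod_lift n (padMod n x))

lemma inducedMap_iterate {f : ℤ_[2] → ℤ_[2]} (hf : Compatible f) (n k : ℕ) (x : ℤ_[2]) :
    (inducedMap n f)^[k] (padMod n x) = padMod n (f^[k] x) := by
  induction k generalizing x with
  | zero => rfl
  | succ k ih =>
    rw [Function.iterate_succ_apply, Function.iterate_succ_apply,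
      inducedMap_padMod hf, ih]

lemma cast_padMod (n : ℕ) (x : ℤ_[2]) :
    ZMod.castHom (pow_dvd_pow 2 (Nat.le_succ n)) (ZMod (2^n)) (padMod (n+1) x) = padMod n x := by
  rw [padMod_eq, padMod_eq, ZMod.castHom_apply, PadicInt.cast_toZModPow n (n+1) (Nat.le_succ n)]
section SC
variable {α : Type*} [Fintype α] [DecidableEq α] {g : α → α}

lemma SC.surj (hg : IsSingleCycle g) : Function.Surjective g := by
  intro b
  obtain ⟨k, hk⟩ := hg (g b) b
  exact ⟨g^[k] b, (Function.iterate_succ_apply' g k b).symm.trans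
    ((Function.iterate_succ_apply g k b).trans hk)⟩

lemma SC.bij (hg : IsSingleCycle g) : Function.Bijective g :=
  (Finite.surjective_iff_bijective).1 (SC.surj hg)

omit [Fintype α] [DecidableEq α] in
lemma iterate_mul_fixed {a : α} {r : ℕ} (ha : g^[r] a = a) (m : ℕ) : g^[r * m] a = a := by
  induction m with
  | zero => simp
  | succ m ih => rw [Nat.mul_succ, Function.iterate_add_apply, ha, ih]

omit [Fintype α] [DecidableEq α] in
lemma iterate_mod {a : α} {r : ℕ} (ha : g^[r] a = a) (k : ℕ) :
    g^[k] a = g^[k % r] a := by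
  conv_lhs => rw [← Nat.mod_add_div k r, Function.iterate_add_apply,
    iterate_mul_fixed ha]

lemma SC.period_ge (hg : IsSingleCycle g) {a : α} {r : ℕ} (hr : 0 < r) (ha : g^[r] a = a) :
    Fintype.card α ≤ r := by
  have hsub : (Finset.univ : Finset α) ⊆ (Finset.range r).image (fun m => g^[m] a) := by
    intro b _
    obtain ⟨k, hk⟩ := hg a b
    simp only [Finset.mem_image, Finset.mem_range]
    exact ⟨k % r, Nat.mod_lt _ hr, by rw [← iterate_mod ha, hk]⟩
  calc Fintype.card α = (Finset.univ : Finset α).card := (Finset.card_univ).symm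
    _ ≤ ((Finset.range r).image (fun m => g^[m] a)).card := Finset.card_le_card hsub
    _ ≤ r := le_trans (Finset.card_image_le) (by simp)

lemma SC.orbit_inj (hg : IsSingleCycle g) (a : α) : ∀ i j, i < Fintype.card α →
    j < Fintype.card α → g^[i] a = g^[j] a → i = j := by
  have main : ∀ i j, i ≤ j → j < Fintype.card α → g^[i] a = g^[j] a → i = j := by
    intro i j hij hj h
    by_contra hne
    have hlt : i < j := lt_of_le_of_ne hij hne
    have hfix : g^[j - i] a = a := by
      have hinj : Function.Injective (g^[i]) := (Function.Bijective.iterate (SC.bij hg) i).1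
      apply hinj
      rw [← Function.iterate_add_apply, Nat.add_sub_cancel' hij, ← h]
    have := SC.period_ge hg (Nat.sub_pos_of_lt hlt) hfix
    omega
  intro i j hi hj h
  rcases le_total i j with hle | hle
  · exact main i j hle hj h
  · exact (main j i hle hi h.symm).symm

lemma SC.orbit_bij (hg : IsSingleCycle g) (a : α) :
    Function.Bijective (fun i : Fin (Fintype.card α) => g^[(i:ℕ)] a) := by
  rw [Fintype.bijective_iff_injective_and_card]
  exact ⟨fun i j hij => Fin.ext (SC.orbit_inj hg a _ _ i.2 j.2 hij), by simp⟩

lemma SC.iterate_card (hg : IsSingleCycle g) (a : α) : g^[Fintype.card α] a = a := by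
  obtain ⟨k, hkeq⟩ := (SC.orbit_bij hg a).2 (g^[Fintype.card α] a)
  simp only at hkeq
  rcases Nat.eq_zero_or_pos (k : ℕ) with hk0 | hk0
  · rw [← hkeq, hk0]; rfl
  · exfalso
    have hinj : Function.Injective (g^[(k:ℕ)]) :=
      (Function.Bijective.iterate (SC.bij hg) _).1
    have hfix : g^[Fintype.card α - (k:ℕ)] a = a := by
      apply hinj
      rw [← Function.iterate_add_apply, Nat.add_sub_cancel' k.2.le, hkeq]
    have := SC.period_ge hg (Nat.sub_pos_of_lt k.2) hfix
    omega

lemma SC.sum_orbit {M : Type*} [AddCommMonoid M] (hg : IsSingleCycle g) (a : α) (h : α → M) :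
    ∑ k ∈ Finset.range (Fintype.card α), h (g^[k] a) = ∑ b, h b := by
  rw [← Fin.sum_univ_eq_sum_range (fun k => h (g^[k] a))]
  exact Fintype.sum_bijective _ (SC.orbit_bij hg a) _ _ (fun i => rfl)
end SC

-- ZMod-level infrastructure
lemma padMod_zero (n : ℕ) : padMod n (0 : ℤ_[2]) = 0 := by rw [padMod_eq, map_zero]

lemma zmod_card_pow (n : ℕ) : Fintype.card (ZMod (2^n)) = 2^n := ZMod.card _

lemma twopow_ne_zero (n : ℕ) : ((2^n : ℕ) : ZMod (2^(n+1))) ≠ 0 := by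
  intro h
  rw [ZMod.natCast_eq_zero_iff] at h
  have h1 := Nat.le_of_dvd (by positivity) h
  have h2 : (2:ℕ)^(n+1) = 2 * 2^n := by ring
  have h3 : 0 < (2:ℕ)^n := pow_pos (by norm_num) n
  omega

lemma twopow_add_self (n : ℕ) :
    ((2^n : ℕ) : ZMod (2^(n+1))) + ((2^n : ℕ) : ZMod (2^(n+1))) = 0 := by
  rw [← Nat.cast_add, ZMod.natCast_eq_zero_iff]
  exact ⟨1, by ring⟩

lemma pi_eq_iff (n : ℕ) (x y : ZMod (2^(n+1))) :
    ZMod.castHom (pow_dvd_pow 2 (Nat.le_succ n)) (ZMod (2^n)) x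
      = ZMod.castHom (pow_dvd_pow 2 (Nat.le_succ n)) (ZMod (2^n)) y
      ↔ x = y ∨ x = y + ((2^n : ℕ) : ZMod (2^(n+1))) := by
  constructor
  · intro h
    have hd : ZMod.castHom (pow_dvd_pow 2 (Nat.le_succ n)) (ZMod (2^n)) (x - y) = 0 := by
      rw [map_sub, h, sub_self]
    have hv : ((2:ℕ)^n : ℕ) ∣ (x - y).val := by
      have h0 : (((x-y).val : ℕ) : ZMod (2^n)) = 0 := by
        rw [ZMod.castHom_apply] at hd
        rw [ZMod.natCast_val]
        exact hd
      rwa [ZMod.natCast_eq_zero_iff] at h0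
    have hlt : (x - y).val < 2^(n+1) := ZMod.val_lt _
    have h2 : (2:ℕ)^(n+1) = 2 * 2^n := by ring
    obtain ⟨c, hc⟩ := hv
    have hc2 : c < 2 := by
      rw [hc, h2] at hlt
      have h3 : 0 < (2:ℕ)^n := pow_pos (by norm_num) n
      by_contra hge
      push_neg at hge
      have : (2:ℕ)^n * 2 ≤ 2^n * c := Nat.mul_le_mul_left _ hge
      linarith
    have hxy : x = y + (((x - y).val : ℕ) : ZMod (2^(n+1))) := by
      rw [ZMod.natCast_zmod_val]; ring
    interval_cases c
    · left; rw [hxy, hc]; simp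
    · right; rw [hxy, hc]; norm_num
  · rintro (rfl | rfl)
    · rfl
    · rw [map_add, map_natCast, ZMod.natCast_self, add_zero]

lemma pi_inducedMap {f : ℤ_[2] → ℤ_[2]} (hf : Compatible f) (n : ℕ) (a : ZMod (2^(n+1))) :
    ZMod.castHom (pow_dvd_pow 2 (Nat.le_succ n)) (ZMod (2^n)) (inducedMap (n+1) f a)
      = inducedMap n f (ZMod.castHom (pow_dvd_pow 2 (Nat.le_succ n)) (ZMod (2^n)) a) := by
  set π := ZMod.castHom (pow_dvd_pow 2 (Nat.le_succ n)) (ZMod (2^n))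
  show π (padMod (n+1) (f ((a.val : ℕ) : ℤ_[2]))) = _
  rw [cast_padMod]
  have h1 : padMod n (((a.val : ℕ) : ℤ_[2])) = π a := by
    rw [← cast_padMod, padMod_lift]
  rw [show inducedMap n f (π a) = padMod n (f (((π a).val : ℕ) : ℤ_[2])) from rfl]
  apply compat_mod hf
  rw [h1, padMod_lift]

lemma pi_inducedMap_iter {f : ℤ_[2] → ℤ_[2]} (hf : Compatible f) (n k : ℕ) (a : ZMod (2^(n+1))) :
    ZMod.castHom (pow_dvd_pow 2 (Nat.le_succ n)) (ZMod (2^n)) ((inducedMap (n+1) f)^[k] a)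
      = (inducedMap n f)^[k] (ZMod.castHom (pow_dvd_pow 2 (Nat.le_succ n)) (ZMod (2^n)) a) := by
  induction k generalizing a with
  | zero => rfl
  | succ k ih => rw [Function.iterate_succ_apply, Function.iterate_succ_apply, ih,
      pi_inducedMap hf]

-- ====== direction (⇐) ======
section Repr
variable {f v : ℤ_[2] → ℤ_[2]}

lemma padMod_add (n : ℕ) (x y : ℤ_[2]) : padMod n (x + y) = padMod n x + padMod n y := by
  rw [padMod_eq, padMod_eq, padMod_eq, map_add]

lemma padMod_natCast (n : ℕ) (k : ℕ) : padMod n ((k : ℕ) : ℤ_[2]) = (k : ZMod (2^n)) := by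
  rw [padMod_eq, map_natCast]

set_option maxHeartbeats 1000000 in
lemma repr_compat (hv : Compatible v)
    (hform : ∀ x : ℤ_[2], f x = 1 + x + 2 * (v (x + 1) - v x)) : Compatible f := by
  intro x y
  have hxy : f x - f y = (x - y) + 2 * ((v (x+1) - v (y+1)) - (v x - v y)) := by
    rw [hform, hform]; ring
  rw [hxy]
  refine le_trans (PadicInt.nonarchimedean _ _) (max_le le_rfl ?_)
  have h2 : ‖(2:ℤ_[2]) * ((v (x+1) - v (y+1)) - (v x - v y))‖
      ≤ ‖(v (x+1) - v (y+1)) - (v x - v y)‖ := by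
    refine le_trans (norm_mul_le _ _) ?_
    exact mul_le_of_le_one_left (norm_nonneg _) (PadicInt.norm_le_one _)
  have h3 : ‖(v (x+1) - v (y+1)) - (v x - v y)‖ ≤ ‖x - y‖ := by
    rw [sub_eq_add_neg]
    refine le_trans (PadicInt.nonarchimedean _ (-(v x - v y))) ?_
    apply max_le
    · have h4 := hv (x+1) (y+1)
      have e : x + 1 - (y + 1) = x - y := by ring
      rwa [e] at h4
    · rw [norm_neg]; exact hv x y
  exact le_trans h2 h3

lemma telescope (hform : ∀ x : ℤ_[2], f x = 1 + x + 2 * (v (x + 1) - v x)) (x : ℤ_[2]) :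
    ∀ N : ℕ, f^[N] x = x + (N : ℤ_[2])
      + 2 * ∑ k ∈ Finset.range N, (v (f^[k] x + 1) - v (f^[k] x)) := by
  intro N
  induction N with
  | zero => simp
  | succ N ih =>
    rw [Function.iterate_succ_apply', hform (f^[N] x), Finset.sum_range_succ]
    push_cast
    linear_combination ih

lemma step_repr (hv : Compatible v) (hf : Compatible f)
    (hform : ∀ x : ℤ_[2], f x = 1 + x + 2 * (v (x + 1) - v x))
    (n : ℕ) (hn : IsSingleCycle (inducedMap n f)) (c : ZMod (2^(n+1))) :
    (inducedMap (n+1) f)^[2^n] c = c + ((2^n : ℕ) : ZMod (2^(n+1))) := by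
  set x := ((c.val : ℕ) : ℤ_[2]) with hxdef
  have hc : padMod (n+1) x = c := padMod_lift _ _
  have h1 : (inducedMap (n+1) f)^[2^n] c = padMod (n+1) (f^[2^n] x) := by
    rw [← hc, inducedMap_iterate hf]
  set S : ℤ_[2] := ∑ k ∈ Finset.range (2^n), (v (f^[k] x + 1) - v (f^[k] x)) with hS
  have hdvdS : (2:ℤ_[2])^n ∣ S := by
    rw [← sub_zero S, ← padMod_eq_iff, padMod_zero]
    have hterm : ∀ k, padMod n (v (f^[k] x + 1) - v (f^[k] x))
        = inducedMap n v ((inducedMap n f)^[k] (padMod n x) + 1)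
          - inducedMap n v ((inducedMap n f)^[k] (padMod n x)) := by
      intro k
      have e1 : padMod n (f^[k] x) = (inducedMap n f)^[k] (padMod n x) :=
        (inducedMap_iterate hf n k x).symm
      have e2 : padMod n (f^[k] x + 1) = (inducedMap n f)^[k] (padMod n x) + 1 := by
        rw [padMod_eq, map_add, map_one, ← padMod_eq, e1]
      rw [padMod_eq, map_sub, ← padMod_eq, ← padMod_eq, ← inducedMap_padMod hv,
        ← inducedMap_padMod hv, e1, e2]
    rw [hS, padMod_eq, map_sum]
    simp only [← padMod_eq, hterm]
    rw [Finset.sum_sub_distrib]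
    have hrange : Finset.range (2^n) = Finset.range (Fintype.card (ZMod (2^n))) := by
      rw [zmod_card_pow]
    rw [hrange, SC.sum_orbit hn (padMod n x) (fun b => inducedMap n v (b + 1)),
      SC.sum_orbit hn (padMod n x) (fun b => inducedMap n v b)]
    rw [Fintype.sum_equiv (Equiv.addRight (1 : ZMod (2^n)))
      (fun b => inducedMap n v (b + 1)) (fun b => inducedMap n v b) (fun b => rfl)]
    rw [sub_self]
  have hdvd2S : (2:ℤ_[2])^(n+1) ∣ 2 * S := by
    obtain ⟨t, ht⟩ := hdvdS
    exact ⟨t, by rw [ht]; ring⟩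
  have hzero : padMod (n+1) (2 * S) = 0 := by
    have h0 := (padMod_eq_iff (n+1) (2*S) 0).2 (by rw [sub_zero]; exact hdvd2S)
    rwa [padMod_zero] at h0
  rw [h1, telescope hform x (2^n), ← hS, padMod_add, padMod_add, padMod_natCast,
    padMod_natCast, hzero, add_zero, ZMod.natCast_zmod_val]

lemma repr_ergodic (hv : Compatible v) (hf : Compatible f)
    (hform : ∀ x : ℤ_[2], f x = 1 + x + 2 * (v (x + 1) - v x)) : ErgodicZ f := by
  intro n
  induction n with
  | zero =>
    intro a b
    have hsub : Subsingleton (ZMod (2^0)) := by rw [pow_zero]; exact inferInstance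
    exact ⟨0, Subsingleton.elim _ _⟩
  | succ n ih =>
    intro a b
    obtain ⟨k, hk⟩ := ih (ZMod.castHom (pow_dvd_pow 2 (Nat.le_succ n)) (ZMod (2^n)) a)
      (ZMod.castHom (pow_dvd_pow 2 (Nat.le_succ n)) (ZMod (2^n)) b)
    have hπ : ZMod.castHom (pow_dvd_pow 2 (Nat.le_succ n)) (ZMod (2^n))
        ((inducedMap (n+1) f)^[k] a)
        = ZMod.castHom (pow_dvd_pow 2 (Nat.le_succ n)) (ZMod (2^n)) b := by
      rw [pi_inducedMap_iter hf, hk]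
    rcases (pi_eq_iff n _ b).1 hπ with h | h
    · exact ⟨k, h⟩
    · refine ⟨2^n + k, ?_⟩
      rw [Function.iterate_add_apply, step_repr hv hf hform n ih, h, add_assoc,
        twopow_add_self, add_zero]
end Repr

-- ====== direction (⇒) ======
section Erg
variable {f : ℤ_[2] → ℤ_[2]}

lemma erg_half_step (hf : Compatible f) (hE : ErgodicZ f) (n : ℕ) (c : ZMod (2^(n+1))) :
    (inducedMap (n+1) f)^[2^n] c = c + ((2^n : ℕ) : ZMod (2^(n+1))) := by
  have hπ : ZMod.castHom (pow_dvd_pow 2 (Nat.le_succ n)) (ZMod (2^n))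
      ((inducedMap (n+1) f)^[2^n] c)
      = ZMod.castHom (pow_dvd_pow 2 (Nat.le_succ n)) (ZMod (2^n)) c := by
    rw [pi_inducedMap_iter hf]
    have h := SC.iterate_card (hE n)
      (ZMod.castHom (pow_dvd_pow 2 (Nat.le_succ n)) (ZMod (2^n)) c)
    rwa [zmod_card_pow] at h
  rcases (pi_eq_iff n _ c).1 hπ with h | h
  · exfalso
    have hlt : (2:ℕ)^n < 2^(n+1) := by
      have h2 : (2:ℕ)^(n+1) = 2*2^n := by ring
      have h3 : 0 < (2:ℕ)^n := pow_pos (by norm_num) n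
      omega
    have hinj := SC.orbit_inj (hE (n+1)) c (2^n) 0
    rw [zmod_card_pow] at hinj
    exact (pow_ne_zero n (by norm_num : (2:ℕ) ≠ 0)) (hinj hlt (by positivity) h)
  · exact h

lemma erg_fiber_shift (hf : Compatible f) (hE : ErgodicZ f) (n : ℕ) (z : ZMod (2^(n+1))) :
    inducedMap (n+1) f (z + ((2^n : ℕ) : ZMod (2^(n+1))))
      = inducedMap (n+1) f z + ((2^n : ℕ) : ZMod (2^(n+1))) := by
  have hne : z + ((2^n : ℕ) : ZMod (2^(n+1))) ≠ z := by
    intro h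
    exact twopow_ne_zero n (add_eq_left.1 h)
  have hπ : ZMod.castHom (pow_dvd_pow 2 (Nat.le_succ n)) (ZMod (2^n))
      (inducedMap (n+1) f (z + ((2^n : ℕ) : ZMod (2^(n+1)))))
      = ZMod.castHom (pow_dvd_pow 2 (Nat.le_succ n)) (ZMod (2^n)) (inducedMap (n+1) f z) := by
    rw [pi_inducedMap hf, pi_inducedMap hf, map_add, map_natCast, ZMod.natCast_self, add_zero]
  rcases (pi_eq_iff n _ _).1 hπ with h | h
  · exact absurd ((SC.bij (hE (n+1))).1 h) hne
  · exact h

lemma padMod_sub (n : ℕ) (x y : ℤ_[2]) : padMod n (x - y) = padMod n x - padMod n y := by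
  rw [padMod_eq, padMod_eq, padMod_eq, map_sub]

lemma padMod_one (n : ℕ) : padMod n (1 : ℤ_[2]) = 1 := by rw [padMod_eq, map_one]

lemma sum_shift {M : Type*} [AddCommMonoid M] (n : ℕ) (h : ZMod (2^n) → M) (c : ZMod (2^n)) :
    ∑ j ∈ Finset.range (2^n), h (c + (j : ZMod (2^n))) = ∑ b, h b := by
  have hbij : Function.Bijective (fun j : Fin (2^n) => c + ((j : ℕ) : ZMod (2^n))) := by
    rw [Fintype.bijective_iff_injective_and_card]
    constructor
    · intro i j hij
      simp only [add_right_inj] at hij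
      have h1 : ((i:ℕ) : ZMod (2^n)).val = (i:ℕ) := ZMod.val_natCast_of_lt i.2
      have h2 : ((j:ℕ) : ZMod (2^n)).val = (j:ℕ) := ZMod.val_natCast_of_lt j.2
      exact Fin.ext (by rw [← h1, ← h2, hij])
    · rw [Fintype.card_fin, zmod_card_pow]
  rw [← Fin.sum_univ_eq_sum_range (fun j => h (c + (j : ZMod (2^n))))]
  exact Fintype.sum_bijective _ hbij _ _ (fun i => rfl)

/-- The fundamental divisibility: over any block of `2^n` consecutive integers,
the sum of `f(t) - t - 1` is divisible by `2^(n+1)`. -/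
lemma erg_key_sum (hf : Compatible f) (hE : ErgodicZ f) (n : ℕ) (a : ℕ) :
    (2:ℤ_[2])^(n+1) ∣ ∑ j ∈ Finset.range (2^n),
      (f (((a+j : ℕ) : ℤ_[2])) - ((a+j : ℕ) : ℤ_[2]) - 1) := by
  set F := inducedMap (n+1) f with hF
  set π := ZMod.castHom (pow_dvd_pow 2 (Nat.le_succ n)) (ZMod (2^n)) with hπdef
  set φ : ZMod (2^(n+1)) → ZMod (2^(n+1)) := fun z => F z - z - 1 with hφ
  set φbar : ZMod (2^n) → ZMod (2^(n+1)) := fun b => φ ((b.val : ℕ) : ZMod (2^(n+1))) with hφbar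
  -- φ is invariant under adding 2^n
  have hshift : ∀ z, φ (z + ((2^n:ℕ) : ZMod (2^(n+1)))) = φ z := by
    intro z
    simp only [hφ, hF]
    rw [erg_fiber_shift hf hE]
    ring
  -- φ factors through π
  have hfact : ∀ z, φ z = φbar (π z) := by
    intro z
    have hl : π (((π z).val : ℕ) : ZMod (2^(n+1))) = π z := by
      rw [map_natCast, ZMod.natCast_zmod_val]
    show φ z = φ (((π z).val : ℕ) : ZMod (2^(n+1)))
    rcases (pi_eq_iff n z _).1 hl.symm with h | h
    · rw [← h]
    · exact (congrArg φ h).trans (hshift _)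
  -- telescoping over the orbit
  have htel : ∀ N : ℕ, ∑ k ∈ Finset.range N, φ (F^[k] ((a : ZMod (2^(n+1)))))
      = F^[N] ((a : ZMod (2^(n+1)))) - (a : ZMod (2^(n+1))) - ((N:ℕ) : ZMod (2^(n+1))) := by
    intro N
    induction N with
    | zero => simp
    | succ N ih =>
      rw [Finset.sum_range_succ, ih, Function.iterate_succ_apply']
      simp only [hφ]
      push_cast
      ring
  have horbit0 : ∑ k ∈ Finset.range (2^n), φ (F^[k] ((a : ZMod (2^(n+1))))) = 0 := by
    rw [htel (2^n), erg_half_step hf hE]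
    ring
  -- the orbit sum equals the full fiber sum
  have horb : ∑ k ∈ Finset.range (2^n), φ (F^[k] ((a : ZMod (2^(n+1)))))
      = ∑ b, φbar b := by
    have hrange : Finset.range (2^n) = Finset.range (Fintype.card (ZMod (2^n))) := by
      rw [zmod_card_pow]
    calc ∑ k ∈ Finset.range (2^n), φ (F^[k] ((a : ZMod (2^(n+1)))))
        = ∑ k ∈ Finset.range (2^n), φbar ((inducedMap n f)^[k] (π ((a : ZMod (2^(n+1)))))) := by
          refine Finset.sum_congr rfl (fun k _ => ?_)
          rw [hfact, hπdef, pi_inducedMap_iter hf]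
      _ = ∑ b, φbar b := by
          rw [hrange, SC.sum_orbit (hE n)]
  -- the consecutive sum equals the full fiber sum
  have hconsec : ∑ j ∈ Finset.range (2^n), φ (((a+j : ℕ) : ZMod (2^(n+1))))
      = ∑ b, φbar b := by
    calc ∑ j ∈ Finset.range (2^n), φ (((a+j : ℕ) : ZMod (2^(n+1))))
        = ∑ j ∈ Finset.range (2^n), φbar ((a : ZMod (2^n)) + (j : ZMod (2^n))) := by
          refine Finset.sum_congr rfl (fun j hj => ?_)
          rw [hfact]
          congr 1
          rw [hπdef, map_natCast]
          push_cast
          rfl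
      _ = ∑ b, φbar b := sum_shift n φbar _
  have hzero : ∑ j ∈ Finset.range (2^n), φ (((a+j : ℕ) : ZMod (2^(n+1)))) = 0 := by
    rw [hconsec, ← horb, horbit0]
  -- translate back to ℤ_[2]
  have htrans : ∀ j : ℕ, padMod (n+1) (f (((a+j : ℕ) : ℤ_[2])) - ((a+j : ℕ) : ℤ_[2]) - 1)
      = φ (((a+j : ℕ) : ZMod (2^(n+1)))) := by
    intro j
    rw [padMod_sub, padMod_sub, padMod_one, padMod_natCast]
    have : padMod (n+1) (f (((a+j : ℕ) : ℤ_[2]))) = F (((a+j:ℕ) : ZMod (2^(n+1)))) := by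
      rw [hF, ← padMod_natCast (n+1) (a+j), inducedMap_padMod hf]
    rw [this]
  have hfinal : padMod (n+1) (∑ j ∈ Finset.range (2^n),
      (f (((a+j : ℕ) : ℤ_[2])) - ((a+j : ℕ) : ℤ_[2]) - 1)) = 0 := by
    rw [padMod_eq, map_sum]
    simp only [← padMod_eq, htrans]
    exact hzero
  have := (padMod_eq_iff (n+1) _ 0).1 (by rw [hfinal, padMod_zero])
  rwa [sub_zero] at this

/-- mod 2, an ergodic map is x ↦ x+1 -/
lemma erg_mod_two (hf : Compatible f) (hE : ErgodicZ f) (x : ℤ_[2]) :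
    (2:ℤ_[2]) ∣ (f x - (x + 1)) := by
  have h1 : ∀ b : ZMod (2^1), inducedMap 1 f b = b + 1 := by
    intro b
    have hne : inducedMap 1 f b ≠ b := by
      intro h
      have hper : (inducedMap 1 f)^[1] b = b := by simpa using h
      have := SC.period_ge (hE 1) (by norm_num) hper
      rw [zmod_card_pow] at this
      norm_num at this
    set d : ZMod (2^1) := inducedMap 1 f b - b with hd
    have hdne : d ≠ 0 := by
      intro h
      exact hne (by rw [← sub_eq_zero]; exact h)
    have hval : d.val < 2 := by
      have := ZMod.val_lt d
      norm_num at this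
      omega
    have hvalne : d.val ≠ 0 := fun h => hdne (by rw [← ZMod.natCast_zmod_val d, h, Nat.cast_zero])
    have hval1 : d.val = 1 := by omega
    have : d = 1 := by rw [← ZMod.natCast_zmod_val d, hval1, Nat.cast_one]
    rw [← sub_eq_iff_eq_add', ← hd, this]
  have h2 : padMod 1 (f x) = padMod 1 (x + 1) := by
    rw [← inducedMap_padMod hf, h1, padMod_add, padMod_one]
  have := (padMod_eq_iff 1 _ _).1 h2
  rwa [pow_one] at this

/-- the increment function w with f x = 1 + x + 2 w x -/
lemma erg_exists_w (hf : Compatible f) (hE : ErgodicZ f) :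
    ∃ w : ℤ_[2] → ℤ_[2], ∀ x, f x = 1 + x + 2 * w x := by
  have h : ∀ x, ∃ c, f x - (x+1) = 2 * c := fun x => (erg_mod_two hf hE x)
  exact ⟨fun x => (h x).choose, fun x => by
    have := (h x).choose_spec
    have h2 : f x = (x + 1) + 2 * (h x).choose := by rw [← this]; ring
    rw [h2]; ring⟩

lemma two_ne_zero_Z2 : (2:ℤ_[2]) ≠ 0 := two_ne_zero

lemma w_key_sum (hf : Compatible f) (hE : ErgodicZ f) {w : ℤ_[2] → ℤ_[2]}
    (hw : ∀ x, f x = 1 + x + 2 * w x) (n a : ℕ) :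
    (2:ℤ_[2])^n ∣ ∑ j ∈ Finset.range (2^n), w (((a+j:ℕ) : ℤ_[2])) := by
  have h := erg_key_sum hf hE n a
  have he : ∑ j ∈ Finset.range (2^n), (f (((a+j : ℕ) : ℤ_[2])) - ((a+j : ℕ) : ℤ_[2]) - 1)
      = 2 * ∑ j ∈ Finset.range (2^n), w (((a+j:ℕ) : ℤ_[2])) := by
    rw [Finset.mul_sum]
    refine Finset.sum_congr rfl (fun j _ => ?_)
    rw [hw]; ring
  rw [he, pow_succ, mul_comm ((2:ℤ_[2])^n) 2] at h
  exact (mul_dvd_mul_iff_left two_ne_zero_Z2).1 h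
end Erg

noncomputable def partialSum (w : ℤ_[2] → ℤ_[2]) (k : ℕ) : ℤ_[2] :=
  ∑ j ∈ Finset.range k, w ((j:ℕ) : ℤ_[2])

lemma partialSum_block (w : ℤ_[2] → ℤ_[2]) (b t : ℕ) :
    partialSum w (b + t) - partialSum w b
      = ∑ j ∈ Finset.range t, w (((b+j:ℕ) : ℤ_[2])) := by
  induction t with
  | zero => simp
  | succ t ih =>
    have : b + (t+1) = (b+t) + 1 := by ring
    rw [this, partialSum, Finset.sum_range_succ, ← partialSum, Finset.sum_range_succ, ← ih]
    ring

section Erg2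
variable {f : ℤ_[2] → ℤ_[2]}

lemma w_step3 (hf : Compatible f) (hE : ErgodicZ f) {w : ℤ_[2] → ℤ_[2]}
    (hw : ∀ x, f x = 1 + x + 2 * w x) (n : ℕ) : ∀ (m a : ℕ),
    (2:ℤ_[2])^n ∣ partialSum w (a + m * 2^n) - partialSum w a := by
  intro m
  induction m with
  | zero => simp
  | succ m ih =>
    intro a
    have harr : a + (m+1) * 2^n = (a + m * 2^n) + 2^n := by ring
    have h1 : partialSum w ((a + m * 2^n) + 2^n) - partialSum w (a + m * 2^n)
        = ∑ j ∈ Finset.range (2^n), w (((a + m * 2^n + j : ℕ) : ℤ_[2])) :=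
      partialSum_block w _ _
    have h2 := w_key_sum hf hE hw n (a + m * 2^n)
    have h3 : partialSum w (a + (m+1) * 2^n) - partialSum w a
        = (partialSum w ((a + m * 2^n) + 2^n) - partialSum w (a + m * 2^n))
          + (partialSum w (a + m * 2^n) - partialSum w a) := by
      rw [harr]; ring
    rw [h3, h1]
    exact dvd_add (h2) (ih a)

lemma w_step3' (hf : Compatible f) (hE : ErgodicZ f) {w : ℤ_[2] → ℤ_[2]}
    (hw : ∀ x, f x = 1 + x + 2 * w x) (n : ℕ) (a b : ℕ) (hab : a ≤ b)
    (hd : (2^n : ℕ) ∣ b - a) : (2:ℤ_[2])^n ∣ partialSum w b - partialSum w a := by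
  obtain ⟨m, hm⟩ := hd
  have hb : b = a + m * 2^n := by
    have hm' : b - a = m * 2^n := by rw [hm]; ring
    omega
  rw [hb]
  exact w_step3 hf hE hw n m a

lemma w_congr (hf : Compatible f) (hE : ErgodicZ f) {w : ℤ_[2] → ℤ_[2]}
    (hw : ∀ x, f x = 1 + x + 2 * w x) (n : ℕ) (a b : ℕ)
    (hd : (2:ℤ_[2])^n ∣ ((a:ℤ_[2]) - (b:ℤ_[2]))) :
    (2:ℤ_[2])^n ∣ partialSum w a - partialSum w b := by
  have main : ∀ (a b : ℕ), b ≤ a → (2:ℤ_[2])^n ∣ ((a:ℤ_[2]) - (b:ℤ_[2])) →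
      (2:ℤ_[2])^n ∣ partialSum w a - partialSum w b := by
    intro a b hba hd
    have hint : ((2:ℤ_[2]))^n ∣ (((a:ℤ) - (b:ℤ) : ℤ) : ℤ_[2]) := by push_cast; exact hd
    have : ((2:ℤ)^n) ∣ ((a:ℤ) - (b:ℤ)) := by
      have := (PadicInt.pow_p_dvd_int_iff n ((a:ℤ) - (b:ℤ))).1 (by exact_mod_cast hint)
      exact_mod_cast this
    have hnat : (2^n : ℕ) ∣ a - b := by
      have h2 : ((a:ℤ) - (b:ℤ)) = ((a - b : ℕ) : ℤ) := by
        rw [Int.ofNat_sub hba]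
      rw [h2] at this
      exact_mod_cast this
    exact w_step3' hf hE hw n b a hba hnat
  rcases le_total b a with h | h
  · exact main a b h hd
  · rw [← dvd_neg]
    have : -(partialSum w a - partialSum w b) = partialSum w b - partialSum w a := by ring
    rw [this]
    exact main b a h (by rw [← dvd_neg]; simpa using hd)

lemma u_dvd (hf : Compatible f) (hE : ErgodicZ f) {w : ℤ_[2] → ℤ_[2]}
    (hw : ∀ x, f x = 1 + x + 2 * w x) (x : ℤ_[2]) {n m : ℕ} (h : n ≤ m) :
    (2:ℤ_[2])^n ∣ partialSum w (x.appr m) - partialSum w (x.appr n) :=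
  w_step3' hf hE hw n (x.appr n) (x.appr m) (x.appr_mono h) (x.dvd_appr_sub_appr n m h)

lemma zpow_neg_natCast_eq (N : ℕ) : (2:ℝ)^(-(N:ℤ)) = (1/2:ℝ)^N := by
  rw [zpow_neg, zpow_natCast, one_div, inv_pow]

lemma u_cauchy (hf : Compatible f) (hE : ErgodicZ f) {w : ℤ_[2] → ℤ_[2]}
    (hw : ∀ x, f x = 1 + x + 2 * w x) (x : ℤ_[2]) :
    CauchySeq (fun n => partialSum w (x.appr n)) := by
  refine cauchySeq_of_le_tendsto_0 (fun N => 2*(2:ℝ)^(-(N:ℤ))) ?_ ?_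
  · intro n m N hn hm
    rw [dist_eq_norm]
    have hsplit : partialSum w (x.appr n) - partialSum w (x.appr m)
        = (partialSum w (x.appr n) - partialSum w (x.appr N))
          + (partialSum w (x.appr N) - partialSum w (x.appr m)) := by ring
    have h1 : ‖partialSum w (x.appr n) - partialSum w (x.appr N)‖ ≤ (2:ℝ)^(-(N:ℤ)) := by
      rw [← dvd_iff_norm_le]
      exact u_dvd hf hE hw x hn
    have h2 : ‖partialSum w (x.appr N) - partialSum w (x.appr m)‖ ≤ (2:ℝ)^(-(N:ℤ)) := by
      rw [← norm_neg, ← dvd_iff_norm_le]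
      have e : -(partialSum w (x.appr N) - partialSum w (x.appr m))
          = partialSum w (x.appr m) - partialSum w (x.appr N) := by ring
      rw [e]
      exact u_dvd hf hE hw x hm
    calc ‖partialSum w (x.appr n) - partialSum w (x.appr m)‖
        ≤ ‖partialSum w (x.appr n) - partialSum w (x.appr N)‖
          + ‖partialSum w (x.appr N) - partialSum w (x.appr m)‖ := by
          rw [hsplit]; exact norm_add_le _ _
      _ ≤ 2*(2:ℝ)^(-(N:ℤ)) := by linarith
  · simp_rw [zpow_neg_natCast_eq]
    have := (tendsto_pow_atTop_nhds_zero_of_lt_one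
      (by norm_num : (0:ℝ) ≤ 1/2) (by norm_num : (1/2:ℝ) < 1)).const_mul (2:ℝ)
    simpa using this

noncomputable def vlim (w : ℤ_[2] → ℤ_[2]) (x : ℤ_[2]) : ℤ_[2] :=
  Filter.limUnder Filter.atTop (fun n => partialSum w (x.appr n))

lemma vlim_tendsto (hf : Compatible f) (hE : ErgodicZ f) {w : ℤ_[2] → ℤ_[2]}
    (hw : ∀ x, f x = 1 + x + 2 * w x) (x : ℤ_[2]) :
    Filter.Tendsto (fun n => partialSum w (x.appr n)) Filter.atTop (nhds (vlim w x)) :=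
  (u_cauchy hf hE hw x).tendsto_limUnder

lemma vlim_dvd (hf : Compatible f) (hE : ErgodicZ f) {w : ℤ_[2] → ℤ_[2]}
    (hw : ∀ x, f x = 1 + x + 2 * w x) (x : ℤ_[2]) (n : ℕ) :
    (2:ℤ_[2])^n ∣ vlim w x - partialSum w (x.appr n) := by
  rw [dvd_iff_norm_le]
  have h1 : Filter.Tendsto (fun m => ‖partialSum w (x.appr m) - partialSum w (x.appr n)‖)
      Filter.atTop (nhds ‖vlim w x - partialSum w (x.appr n)‖) :=
    (Filter.Tendsto.sub_const (vlim_tendsto hf hE hw x) _).norm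
  refine le_of_tendsto h1 ?_
  rw [Filter.eventually_atTop]
  exact ⟨n, fun m hm => by rw [← dvd_iff_norm_le]; exact u_dvd hf hE hw x hm⟩

lemma appr_dvd (x : ℤ_[2]) (n : ℕ) : (2:ℤ_[2])^n ∣ x - (x.appr n : ℤ_[2]) := by
  have := x.appr_spec n
  rwa [Ideal.mem_span_singleton] at this

lemma appr_eq_of_dvd {x y : ℤ_[2]} {n : ℕ} (h : (2:ℤ_[2])^n ∣ x - y) :
    x.appr n = y.appr n := by
  have hpm : padMod n x = padMod n y := (padMod_eq_iff n x y).2 h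
  have hx : (padMod n x).val = x.appr n := ZMod.val_natCast_of_lt (x.appr_lt n)
  have hy : (padMod n y).val = y.appr n := ZMod.val_natCast_of_lt (y.appr_lt n)
  rw [← hx, ← hy, hpm]

lemma vlim_compat (hf : Compatible f) (hE : ErgodicZ f) {w : ℤ_[2] → ℤ_[2]}
    (hw : ∀ x, f x = 1 + x + 2 * w x) : Compatible (vlim w) := by
  intro x y
  by_cases hxy : x = y
  · rw [hxy]; simp
  have hsub : x - y ≠ 0 := sub_ne_zero_of_ne hxy
  set n : ℕ := (x - y).valuation with hn
  have hval : ((n:ℤ)) = (x-y).valuation := rfl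
  have hnorm : ‖x - y‖ = (2:ℝ)^(-(n:ℤ)) := by
    rw [PadicInt.norm_eq_zpow_neg_valuation hsub, hval]
    norm_num
  have hdxy : (2:ℤ_[2])^n ∣ x - y := by rw [dvd_iff_norm_le, ← hnorm]
  have happr : x.appr n = y.appr n := appr_eq_of_dvd hdxy
  have h1 := vlim_dvd hf hE hw x n
  have h2 := vlim_dvd hf hE hw y n
  have h3 : (2:ℤ_[2])^n ∣ vlim w x - vlim w y := by
    have e : vlim w x - vlim w y
        = (vlim w x - partialSum w (x.appr n)) - (vlim w y - partialSum w (y.appr n)) := by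
      rw [happr]; ring
    rw [e]
    exact dvd_sub h1 h2
  rw [hnorm]
  rw [← dvd_iff_norm_le]
  exact h3

lemma eq_zero_of_all_dvd {z : ℤ_[2]} (h : ∀ n : ℕ, (2:ℤ_[2])^n ∣ z) : z = 0 := by
  have hle : ∀ n : ℕ, ‖z‖ ≤ (1/2:ℝ)^n := by
    intro n
    rw [← zpow_neg_natCast_eq, ← dvd_iff_norm_le]
    exact h n
  have htend : Filter.Tendsto (fun n : ℕ => (1/2:ℝ)^n) Filter.atTop (nhds 0) :=
    tendsto_pow_atTop_nhds_zero_of_lt_one (by norm_num) (by norm_num)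
  have : ‖z‖ ≤ 0 := ge_of_tendsto' htend hle
  rwa [norm_le_zero_iff] at this

lemma partialSum_succ (w : ℤ_[2] → ℤ_[2]) (a : ℕ) :
    partialSum w (a+1) = partialSum w a + w ((a:ℕ) : ℤ_[2]) := by
  rw [partialSum, partialSum, Finset.sum_range_succ]

lemma vlim_id (hf : Compatible f) (hE : ErgodicZ f) {w : ℤ_[2] → ℤ_[2]}
    (hw : ∀ x, f x = 1 + x + 2 * w x) (x : ℤ_[2]) :
    f x = 1 + x + 2 * (vlim w (x + 1) - vlim w x) := by
  have hz : vlim w (x+1) - vlim w x - w x = 0 := by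
    apply eq_zero_of_all_dvd
    intro n
    set a := x.appr (n+1) with ha
    set b0 := x.appr n with hb0
    set b1 := (x+1).appr n with hb1
    have hdxa : (2:ℤ_[2])^(n+1) ∣ x - (a:ℤ_[2]) := appr_dvd x (n+1)
    have hdxa' : (2:ℤ_[2])^n ∣ x - (a:ℤ_[2]) :=
      dvd_trans (pow_dvd_pow 2 (Nat.le_succ n)) hdxa
    have h1 : (2:ℤ_[2])^n ∣ vlim w (x+1) - partialSum w b1 := vlim_dvd hf hE hw (x+1) n
    have h3 : (2:ℤ_[2])^n ∣ vlim w x - partialSum w b0 := vlim_dvd hf hE hw x n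
    have h2 : (2:ℤ_[2])^n ∣ partialSum w b1 - partialSum w (a+1) := by
      apply w_congr hf hE hw
      have e : ((b1:ℤ_[2]) - ((a+1 : ℕ) : ℤ_[2]))
          = -((x+1) - (b1:ℤ_[2])) + (x - (a:ℤ_[2])) := by push_cast; ring
      rw [e]
      exact dvd_add (dvd_neg.2 (appr_dvd (x+1) n)) hdxa'
    have h4 : (2:ℤ_[2])^n ∣ partialSum w b0 - partialSum w a := by
      apply w_congr hf hE hw
      have e : ((b0:ℤ_[2]) - (a:ℤ_[2])) = -(x - (b0:ℤ_[2])) + (x - (a:ℤ_[2])) := by ring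
      rw [e]
      exact dvd_add (dvd_neg.2 (appr_dvd x n)) hdxa'
    have h5 : (2:ℤ_[2])^n ∣ w ((a:ℕ) : ℤ_[2]) - w x := by
      have hfa : (2:ℤ_[2])^(n+1) ∣ f ((a:ℕ) : ℤ_[2]) - f x := by
        rw [dvd_iff_norm_le]
        refine le_trans (hf _ _) ?_
        rw [← dvd_iff_norm_le]
        have e : ((a:ℤ_[2]) - x) = -(x - (a:ℤ_[2])) := by ring
        rw [e]
        exact dvd_neg.2 hdxa
      have hax : (2:ℤ_[2])^(n+1) ∣ ((a:ℤ_[2]) - x) := by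
        have e : ((a:ℤ_[2]) - x) = -(x - (a:ℤ_[2])) := by ring
        rw [e]; exact dvd_neg.2 hdxa
      have h2w : (2:ℤ_[2])^(n+1) ∣ 2 * (w ((a:ℕ) : ℤ_[2]) - w x) := by
        have e : 2 * (w ((a:ℕ) : ℤ_[2]) - w x)
            = (f ((a:ℕ) : ℤ_[2]) - f x) - (((a:ℤ_[2])) - x) := by
          rw [hw, hw]; ring
        rw [e]
        exact dvd_sub hfa hax
      rw [pow_succ, mul_comm ((2:ℤ_[2])^n) 2] at h2w
      exact (mul_dvd_mul_iff_left two_ne_zero_Z2).1 h2w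
    have h5' : (2:ℤ_[2])^n ∣ (partialSum w (a+1) - partialSum w a) - w x := by
      have e : partialSum w (a+1) - partialSum w a = w ((a:ℕ) : ℤ_[2]) := by
        rw [partialSum_succ]; ring
      rw [e]; exact h5
    have hzeq : vlim w (x+1) - vlim w x - w x
        = ((vlim w (x+1) - partialSum w b1) + (partialSum w b1 - partialSum w (a+1))
          - (vlim w x - partialSum w b0) - (partialSum w b0 - partialSum w a))
          + ((partialSum w (a+1) - partialSum w a) - w x) := by ring
    rw [hzeq]
    exact dvd_add (dvd_sub (dvd_sub (dvd_add h1 h2) h3) h4) h5'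
  have hvw : vlim w (x+1) - vlim w x = w x := sub_eq_zero.mp hz
  rw [hw x, hvw]
end Erg2


/-- a compatible `f : ℤ₂ → ℤ₂` is ergodic iff
`f(x) = 1 + x + 2·(v(x+1) − v(x))` for some compatible `v`. -/
theorem ergodic_iff_repr (f : ℤ_[2] → ℤ_[2]) (hf : Compatible f) :
    ErgodicZ f ↔
      ∃ v : ℤ_[2] → ℤ_[2], Compatible v ∧
        ∀ x : ℤ_[2], f x = 1 + x + 2 * (v (x + 1) - v x) := by
  constructor
  · intro hE
    obtain ⟨w, hw⟩ := erg_exists_w hf hE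
    exact ⟨vlim w, vlim_compat hf hE hw, vlim_id hf hE hw⟩
  · rintro ⟨v, hv, hform⟩
    exact repr_ergodic hv (repr_compat hv hform) hform
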